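/- Let 0 < q < 1 and let l ≥ 2 be a natural number. Define ψ_l(k) = q^k (1 + Σ_{j=1}^{l−1} ((1−q²)^j/(j! 2^j)) Π_{ν=0}^{j−1} (k+2ν)). Then for every m ≥ 1, sup_{k ≥ m} |ψ_l(k+1)/ψ_l(k) − q| ≤ (2l−3)q/m. -/

import Mathlib

open Real Finset

lemma aux_prod_nonneg (x : ℝ) (hx : 0 ≤ x) (j : ℕ) :
    0 ≤ ∏ ν ∈ Finset.range j, (x + 2 * (ν : ℝ)) :=
  Finset.prod_nonneg fun ν _ => add_nonneg hx (by positivity)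

lemma aux_prod_mono (x : ℝ) (hx : 0 ≤ x) (j : ℕ) :
    ∏ ν ∈ Finset.range j, (x + 2 * (ν : ℝ)) ≤
      ∏ ν ∈ Finset.range j, (x + 1 + 2 * (ν : ℝ)) := by
  apply Finset.prod_le_prod
  · intro ν _; exact add_nonneg hx (by positivity)
  · intro ν _; linarith

lemma aux_key (x : ℝ) (hx : 1 ≤ x) (j : ℕ) (hj : 1 ≤ j) :
    x * ∏ ν ∈ Finset.range j, (x + 1 + 2 * (ν : ℝ)) ≤
      (x + 2 * j - 1) * ∏ ν ∈ Finset.range j, (x + 2 * (ν : ℝ)) := by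
  induction j, hj using Nat.le_induction with
  | base => simp; nlinarith
  | succ j hj ih =>
    rw [Finset.prod_range_succ, Finset.prod_range_succ]
    have h0 : 0 ≤ ∏ ν ∈ Finset.range j, (x + 2 * (ν : ℝ)) :=
      aux_prod_nonneg x (by linarith) j
    have h1 : (0 : ℝ) ≤ x + 1 + 2 * j := by positivity
    have h2 := mul_le_mul_of_nonneg_right ih h1
    push_cast
    nlinarith [mul_nonneg h0 h1, h0]

/-- For `0 < q < 1`, `l ≥ 2` and `m ≥ 1`, the coefficients `ψ_l(k)` of the polyharmonic
Poisson kernel satisfy `sup_{k ≥ m} |ψ_l(k+1)/ψ_l(k) − q| ≤ (2l−3)q/m`. -/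
theorem stmt_2 (q : ℝ) (hq0 : 0 < q) (hq1 : q < 1) (l : ℕ) (hl : 2 ≤ l)
    (ψ : ℕ → ℝ)
    (hψ : ∀ k : ℕ, ψ k = q ^ k *
      (1 + ∑ j ∈ Finset.Icc 1 (l - 1),
        ((1 - q ^ 2) ^ j / ((j.factorial : ℝ) * 2 ^ j)) *
          ∏ ν ∈ Finset.range j, ((k : ℝ) + 2 * ν)))
    (m : ℕ) (hm : 1 ≤ m) :
    (⨆ k : {k : ℕ // m ≤ k}, |ψ ((k : ℕ) + 1) / ψ (k : ℕ) - q|)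
      ≤ ((2 * l - 3 : ℕ) : ℝ) * q / (m : ℝ) := by
  have hC : ((2 * l - 3 : ℕ) : ℝ) = 2 * (l : ℝ) - 3 := by
    have h3 : 3 ≤ 2 * l := by omega
    push_cast [Nat.cast_sub h3]; ring
  have hne : Nonempty {k : ℕ // m ≤ k} := ⟨⟨m, le_refl m⟩⟩
  apply ciSup_le
  rintro ⟨k, hk⟩
  have hk1 : (1 : ℕ) ≤ k := le_trans hm hk
  have hkR : (1 : ℝ) ≤ (k : ℝ) := by exact_mod_cast hk1
  have hq2 : 0 ≤ 1 - q ^ 2 := by nlinarith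
  set c : ℕ → ℝ := fun j => (1 - q ^ 2) ^ j / ((j.factorial : ℝ) * 2 ^ j) with hc
  have hcnn : ∀ j, 0 ≤ c j := fun j => by
    apply div_nonneg (pow_nonneg hq2 j); positivity
  set A : ℝ := 1 + ∑ j ∈ Finset.Icc 1 (l - 1),
      c j * ∏ ν ∈ Finset.range j, ((k : ℝ) + 2 * ν) with hAdef
  set B : ℝ := 1 + ∑ j ∈ Finset.Icc 1 (l - 1),
      c j * ∏ ν ∈ Finset.range j, ((k : ℝ) + 1 + 2 * ν) with hBdef
  have hψk : ψ k = q ^ k * A := hψ k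
  have hψk1 : ψ (k + 1) = q ^ (k + 1) * B := by
    rw [hψ (k + 1)]
    congr 1
    push_cast
    rfl
  have hA0 : 0 < A := by
    apply add_pos_of_pos_of_nonneg one_pos
    apply Finset.sum_nonneg
    intro j _
    exact mul_nonneg (hcnn j) (aux_prod_nonneg _ (by linarith) j)
  have hAB : A ≤ B := by
    apply add_le_add_right
    apply Finset.sum_le_sum
    intro j _
    exact mul_le_mul_of_nonneg_left (aux_prod_mono _ (by linarith) j) (hcnn j)
  -- key bound: k * B ≤ (k + (2l-3)) * A
  have hkey : (k : ℝ) * B ≤ ((k : ℝ) + (2 * (l : ℝ) - 3)) * A := by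
    rw [hAdef, hBdef, mul_add, mul_add, mul_one, Finset.mul_sum, Finset.mul_sum]
    have h1 : (k : ℝ) ≤ ((k : ℝ) + (2 * (l : ℝ) - 3)) * 1 := by
      have : (2 : ℝ) ≤ (l : ℝ) := by exact_mod_cast hl
      nlinarith
    apply add_le_add h1
    apply Finset.sum_le_sum
    intro j hj
    rw [Finset.mem_Icc] at hj
    have hjl : (j : ℝ) ≤ (l : ℝ) - 1 := by
      have h' : j ≤ l - 1 := hj.2
      have : (j : ℝ) ≤ ((l - 1 : ℕ) : ℝ) := by exact_mod_cast h'
      rwa [Nat.cast_sub (by omega), Nat.cast_one] at this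
    have hkj := aux_key (k : ℝ) hkR j hj.1
    have hprod := aux_prod_nonneg (k : ℝ) (by linarith) j
    calc (k : ℝ) * (c j * ∏ ν ∈ Finset.range j, ((k : ℝ) + 1 + 2 * ν))
        = c j * ((k : ℝ) * ∏ ν ∈ Finset.range j, ((k : ℝ) + 1 + 2 * ν)) := by ring
      _ ≤ c j * (((k : ℝ) + 2 * j - 1) * ∏ ν ∈ Finset.range j, ((k : ℝ) + 2 * ν)) :=
          mul_le_mul_of_nonneg_left hkj (hcnn j)
      _ ≤ c j * (((k : ℝ) + (2 * (l : ℝ) - 3)) * ∏ ν ∈ Finset.range j, ((k : ℝ) + 2 * ν)) := by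
          apply mul_le_mul_of_nonneg_left _ (hcnn j)
          apply mul_le_mul_of_nonneg_right _ hprod
          linarith
      _ = ((k : ℝ) + (2 * (l : ℝ) - 3)) * (c j * ∏ ν ∈ Finset.range j, ((k : ℝ) + 2 * ν)) := by
          ring
  -- ratio computation
  have hqk : (q : ℝ) ^ k ≠ 0 := pow_ne_zero k (ne_of_gt hq0)
  have hratio : ψ (k + 1) / ψ k - q = q * (B - A) / A := by
    rw [hψk, hψk1, pow_succ]
    field_simp
  rw [hratio, hC]
  have hnn : 0 ≤ q * (B - A) / A := by
    apply div_nonneg _ (le_of_lt hA0)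
    exact mul_nonneg (le_of_lt hq0) (by linarith)
  rw [abs_of_nonneg hnn]
  have hm0 : (0 : ℝ) < (m : ℝ) := by exact_mod_cast hm
  have hmk : (m : ℝ) ≤ (k : ℝ) := by exact_mod_cast hk
  rw [div_le_div_iff₀ hA0 hm0]
  -- goal: q * (B - A) * m ≤ (2l-3) * q * A
  have h1 : (m : ℝ) * (B - A) ≤ (k : ℝ) * (B - A) :=
    mul_le_mul_of_nonneg_right hmk (by linarith)
  have h2 : (k : ℝ) * (B - A) ≤ (2 * (l : ℝ) - 3) * A := by nlinarith
  nlinarith [mul_le_mul_of_nonneg_left (le_trans h1 h2) (le_of_lt hq0)]
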